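/- Let $N_t \ge 1$ be an integer and $\lambda \ge 0$, $\delta_t \ge 0$, $\delta_r > 0$ be real numbers. Then, as $\rho \to \infty$, $\log_2\Big(1 + \dfrac{(\rho/N_t)\lambda}{(\rho\delta_t^2/N_t)\lambda + \rho\delta_r^2 + 1}\Big) \longrightarrow \log_2\Big(1 + \dfrac{\lambda}{\delta_t^2 \lambda + N_t \delta_r^2}\Big)$. -/

import Mathlib

open Filter

/-- As `ρ → ∞`, the per-eigenvalue rate
`log₂(1 + (ρ/N_t)λ / ((ρ δt²/N_t)λ + ρ δr² + 1))` converges to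
`log₂(1 + λ / (δt² λ + N_t δr²))`. -/
theorem rate_tendsto_high_snr_limit
    (Nt : ℕ) (hNt : 1 ≤ Nt) (lam δt δr : ℝ)
    (hlam : 0 ≤ lam) (hδt : 0 ≤ δt) (hδr : 0 < δr) :
    Tendsto
      (fun ρ : ℝ =>
        Real.logb 2
          (1 + (ρ / Nt * lam) / ((ρ * δt ^ 2 / Nt) * lam + ρ * δr ^ 2 + 1)))
      atTop
      (nhds (Real.logb 2 (1 + lam / (δt ^ 2 * lam + Nt * δr ^ 2)))) := by
  have hNt0 : (0:ℝ) < (Nt:ℝ) := by exact_mod_cast hNt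
  have hNtne : (Nt:ℝ) ≠ 0 := ne_of_gt hNt0
  set D : ℝ := δt ^ 2 * lam / Nt + δr ^ 2 with hD
  have hDpos : 0 < D := by rw [hD]; positivity
  have hND : (Nt:ℝ) * D = δt ^ 2 * lam + Nt * δr ^ 2 := by
    rw [hD]; field_simp
  have hL : lam / Nt / D = lam / (δt ^ 2 * lam + Nt * δr ^ 2) := by
    rw [div_div, hND]
  -- inner limit
  have hinner : Tendsto
      (fun ρ : ℝ => (ρ / Nt * lam) / ((ρ * δt ^ 2 / Nt) * lam + ρ * δr ^ 2 + 1))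
      atTop (nhds (lam / (δt ^ 2 * lam + Nt * δr ^ 2))) := by
    have h1 : Tendsto (fun ρ : ℝ => (lam / Nt) / (D + 1 / ρ)) atTop
        (nhds (lam / Nt / D)) := by
      have hden : Tendsto (fun ρ : ℝ => D + 1 / ρ) atTop (nhds D) := by
        simpa using (tendsto_const_nhds (x := D)).add
          (tendsto_inv_atTop_zero.congr (fun ρ => (one_div ρ).symm))
      exact tendsto_const_nhds.div hden (ne_of_gt hDpos)
    rw [← hL]
    refine h1.congr' ?_
    filter_upwards [eventually_gt_atTop (0:ℝ)] with ρ hρ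
    have hρne : ρ ≠ 0 := ne_of_gt hρ
    rw [hD]
    field_simp
  have hpos : 0 < 1 + lam / (δt ^ 2 * lam + Nt * δr ^ 2) := by
    have : 0 ≤ lam / (δt ^ 2 * lam + Nt * δr ^ 2) := by positivity
    linarith
  have hcont : ContinuousAt (Real.logb 2) (1 + lam / (δt ^ 2 * lam + Nt * δr ^ 2)) := by
    unfold Real.logb
    exact (Real.continuousAt_log (ne_of_gt hpos)).div_const _
  exact hcont.tendsto.comp (tendsto_const_nhds.add hinner)
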